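/- Limit of the Radon–Nikodym derivative between drifted and massive walks on the triangular lattice (Corollary 2.5 of the paper): Fix c₁, c₂, c₃ ∈ ℝ and set Δ = (c₁ + c₂·τ + c₃·τ²)/3. For δ > 0 small enough that 1 + c_k·δ > 0 for all k, set a_k(δ) = 1 + c_k·δ and a(δ) = a₁(δ) + a₂(δ) + a₃(δ). Let (δ_j) be a sequence of positive reals tending to 0, and for each j let γ^j = (x₀^j, …, x_{n_j}^j) be a path of length n_j in the directed triangular lattice of mesh δ_j, with starting points x₀^j → z ∈ ℂ and endpoints x_{n_j}^j → y ∈ ℂ. Then the ratio (∏_{s<n_j} a_{k_s}(δ_j)/a(δ_j)) / ((a₁(δ_j)·a₂(δ_j)·a₃(δ_j))^{1/3}/a(δ_j))^{n_j} converges to exp(2·⟨y − z, Δ⟩) as j → ∞. -/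

import Mathlib

open Finset Filter

/-- The primitive third root of unity `τ = e^{2πi/3}`. -/
noncomputable def triTau : ℂ := Complex.exp (2 * Real.pi * Complex.I / 3)

/-- The real inner product `⟨z, w⟩ = Re (z · conj w)` on `ℂ`. -/
noncomputable def cinner (z w : ℂ) : ℝ := (z * (starRingEnd ℂ) w).re

lemma cinner_eq (z w : ℂ) : cinner z w = z.re * w.re + z.im * w.im := by
  simp [cinner, Complex.mul_re, Complex.conj_re, Complex.conj_im]

lemma triTau_re : triTau.re = -(1/2) := by
  have h : (2 * Real.pi * Complex.I / 3) = ((2 * Real.pi / 3 : ℝ) : ℂ) * Complex.I := by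
    push_cast; ring
  have h2 : (2 * Real.pi / 3 : ℝ) = Real.pi - Real.pi / 3 := by ring
  rw [triTau, h, Complex.exp_ofReal_mul_I_re, h2, Real.cos_pi_sub, Real.cos_pi_div_three]

lemma triTau_im : triTau.im = Real.sqrt 3 / 2 := by
  have h : (2 * Real.pi * Complex.I / 3) = ((2 * Real.pi / 3 : ℝ) : ℂ) * Complex.I := by
    push_cast; ring
  have h2 : (2 * Real.pi / 3 : ℝ) = Real.pi - Real.pi / 3 := by ring
  rw [triTau, h, Complex.exp_ofReal_mul_I_im, h2, Real.sin_pi_sub, Real.sin_pi_div_three]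

lemma triTau_sq_re : (triTau^2).re = -(1/2) := by
  have h3 : Real.sqrt 3 * Real.sqrt 3 = 3 := Real.mul_self_sqrt (by norm_num)
  rw [sq, Complex.mul_re, triTau_re, triTau_im]; nlinarith [h3]

lemma triTau_sq_im : (triTau^2).im = -(Real.sqrt 3 / 2) := by
  rw [sq, Complex.mul_im, triTau_re, triTau_im]; ring

lemma cinner_tau (a b : Fin 3) :
    cinner (triTau ^ (a:ℕ)) (triTau ^ (b:ℕ)) = if a = b then 1 else -(1/2) := by
  have h3 : Real.sqrt 3 * Real.sqrt 3 = 3 := Real.mul_self_sqrt (by norm_num)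
  fin_cases a <;> fin_cases b <;>
    simp [cinner_eq, triTau_re, triTau_im, triTau_sq_re, triTau_sq_im] <;> nlinarith [h3]

lemma key_ident (m : Fin 3) (b : Fin 3 → ℝ) :
    ∑ i : Fin 3, (2/3) * cinner (triTau ^ (m:ℕ)) (triTau ^ (i:ℕ)) * b i
      = b m - (1/3) * ∑ i : Fin 3, b i := by
  fin_cases m <;> rw [Fin.sum_univ_three] <;> beta_reduce <;>
    rw [cinner_tau, cinner_tau, cinner_tau] <;> simp [Fin.sum_univ_three, Fin.ext_iff] <;> ring

lemma cinner_sum (s : Finset ℕ) (f : ℕ → ℂ) (u : ℂ) :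
    cinner (∑ i ∈ s, f i) u = ∑ i ∈ s, cinner (f i) u := by
  simp [cinner_eq, Complex.re_sum, Complex.im_sum, Finset.sum_mul, Finset.sum_add_distrib]

lemma cinner_real_mul (r : ℝ) (w u : ℂ) : cinner ((r:ℂ) * w) u = r * cinner w u := by
  simp [cinner_eq]; ring

lemma log_slope_tendsto (c : ℝ) (δ : ℕ → ℝ) (hδpos : ∀ j, 0 < δ j)
    (hδ0 : Tendsto δ atTop (nhds 0)) :
    Tendsto (fun j => Real.log (1 + c * δ j) / δ j) atTop (nhds c) := by
  have h1 : HasDerivAt (fun t : ℝ => 1 + c * t) c 0 := by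
    simpa using ((hasDerivAt_id (0:ℝ)).const_mul c).const_add 1
  have hd : HasDerivAt (fun t : ℝ => Real.log (1 + c * t)) c 0 := by
    simpa using h1.log (by norm_num)
  have hs := hasDerivAt_iff_tendsto_slope.mp hd
  have hδ' : Tendsto δ atTop (nhdsWithin 0 {(0:ℝ)}ᶜ) := by
    apply tendsto_nhdsWithin_of_tendsto_nhds_of_eventually_within _ hδ0
    exact Eventually.of_forall fun j => (hδpos j).ne'
  exact (hs.comp hδ').congr fun j => by simp [slope_def_field, Function.comp]

/-- **Limit of the Radon–Nikodym derivative between the drifted and the massive walk on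
the triangular lattice** (Corollary 2.5). Along any sequence of paths of mesh `δ_j → 0`
whose starting points converge to `z` and whose endpoints converge to `y`, the ratio of
the drifted path weight to the massive path weight converges to `exp(2⟨y - z, Δ⟩)`,
where `Δ = (c₁ + c₂τ + c₃τ²)/3`. -/
theorem drifted_massive_RN_limit
    (c : Fin 3 → ℝ) (z y : ℂ)
    (δ : ℕ → ℝ) (hδpos : ∀ j, 0 < δ j)
    (hδ0 : Tendsto δ atTop (nhds 0))
    (hpos : ∀ j i, 0 < 1 + c i * δ j)
    (n : ℕ → ℕ) (x : ℕ → ℕ → ℂ) (k : ℕ → ℕ → Fin 3)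
    (hpath : ∀ j, ∀ s < n j, x j (s + 1) - x j s = (δ j : ℂ) * triTau ^ (k j s : ℕ))
    (hz : Tendsto (fun j => x j 0) atTop (nhds z))
    (hy : Tendsto (fun j => x j (n j)) atTop (nhds y)) :
    Tendsto
      (fun j =>
        (∏ s ∈ Finset.range (n j), (1 + c (k j s) * δ j) / (∑ i : Fin 3, (1 + c i * δ j)))
          / (((∏ i : Fin 3, (1 + c i * δ j)) ^ ((1 : ℝ) / 3)
                / (∑ i : Fin 3, (1 + c i * δ j))) ^ (n j)))
      atTop
      (nhds (Real.exp (2 * cinner (y - z)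
        (((c 0 : ℂ) + (c 1 : ℂ) * triTau + (c 2 : ℂ) * triTau ^ 2) / 3)))) := by
  set g : ℕ → ℝ := fun j => ∑ i : Fin 3,
    (2/3) * cinner (x j (n j) - x j 0) (triTau ^ (i:ℕ)) * (Real.log (1 + c i * δ j) / δ j)
    with hg_def
  -- Step 1: the expression equals exp (g j) for every j
  have hEq : ∀ j,
      (∏ s ∈ Finset.range (n j), (1 + c (k j s) * δ j) / (∑ i : Fin 3, (1 + c i * δ j)))
          / (((∏ i : Fin 3, (1 + c i * δ j)) ^ ((1 : ℝ) / 3)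
                / (∑ i : Fin 3, (1 + c i * δ j))) ^ (n j)) = Real.exp (g j) := by
    intro j
    have hA : 0 < ∑ i : Fin 3, (1 + c i * δ j) :=
      Finset.sum_pos (fun i _ => hpos j i) ⟨0, Finset.mem_univ 0⟩
    have hP : 0 < ∏ i : Fin 3, (1 + c i * δ j) := Finset.prod_pos fun i _ => hpos j i
    have htel : x j (n j) - x j 0 = (δ j : ℂ) * ∑ s ∈ Finset.range (n j), triTau ^ (k j s : ℕ) := by
      rw [Finset.mul_sum, ← Finset.sum_range_sub (x j) (n j)]
      exact Finset.sum_congr rfl fun s hs => hpath j s (Finset.mem_range.mp hs)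
    have step1 : g j = (∑ s ∈ Finset.range (n j), Real.log (1 + c (k j s) * δ j))
        - (n j : ℝ) * (Real.log (∏ i : Fin 3, (1 + c i * δ j)) * (1/3)) := by
      rw [hg_def]
      rw [Real.log_prod (fun i _ => (hpos j i).ne')]
      calc (∑ i : Fin 3,
          (2/3) * cinner (x j (n j) - x j 0) (triTau ^ (i:ℕ)) * (Real.log (1 + c i * δ j) / δ j))
          = ∑ i : Fin 3, ∑ s ∈ Finset.range (n j),
              (2/3) * cinner (triTau ^ (k j s : ℕ)) (triTau ^ (i:ℕ)) * Real.log (1 + c i * δ j) := by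
            refine Finset.sum_congr rfl fun i _ => ?_
            rw [htel, cinner_real_mul, cinner_sum, Finset.mul_sum, Finset.mul_sum,
              Finset.sum_mul]
            refine Finset.sum_congr rfl fun s _ => ?_
            field_simp [(hδpos j).ne']
        _ = ∑ s ∈ Finset.range (n j), ∑ i : Fin 3,
              (2/3) * cinner (triTau ^ (k j s : ℕ)) (triTau ^ (i:ℕ)) * Real.log (1 + c i * δ j) :=
            Finset.sum_comm
        _ = ∑ s ∈ Finset.range (n j), (Real.log (1 + c (k j s) * δ j)
              - (1/3) * ∑ i : Fin 3, Real.log (1 + c i * δ j)) :=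
            Finset.sum_congr rfl fun s _ => key_ident (k j s) _
        _ = _ := by
            rw [Finset.sum_sub_distrib, Finset.sum_const, nsmul_eq_mul, Finset.card_range]
            ring
    have e1 : (∏ s ∈ Finset.range (n j), (1 + c (k j s) * δ j) / (∑ i : Fin 3, (1 + c i * δ j)))
        = Real.exp (∑ s ∈ Finset.range (n j), Real.log (1 + c (k j s) * δ j))
            / (∑ i : Fin 3, (1 + c i * δ j)) ^ (n j) := by
      rw [Finset.prod_div_distrib, Finset.prod_const, Finset.card_range]
      congr 1
      rw [Real.exp_sum]
      exact Finset.prod_congr rfl fun s _ => (Real.exp_log (hpos j (k j s))).symm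
    have e2 : (((∏ i : Fin 3, (1 + c i * δ j)) ^ ((1 : ℝ) / 3)
            / (∑ i : Fin 3, (1 + c i * δ j))) ^ (n j))
        = Real.exp ((n j : ℝ) * (Real.log (∏ i : Fin 3, (1 + c i * δ j)) * (1/3)))
            / (∑ i : Fin 3, (1 + c i * δ j)) ^ (n j) := by
      rw [div_pow]
      congr 1
      rw [Real.rpow_def_of_pos hP, ← Real.exp_nat_mul]
    rw [e1, e2, div_div_div_comm, div_self (pow_ne_zero _ hA.ne'), div_one, ← Real.exp_sub, step1]
  -- Step 2: g converges
  have hv : Tendsto (fun j => x j (n j) - x j 0) atTop (nhds (y - z)) := hy.sub hz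
  have hg : Tendsto g atTop
      (nhds (∑ i : Fin 3, (2/3) * cinner (y - z) (triTau ^ (i:ℕ)) * c i)) := by
    refine tendsto_finset_sum _ fun i _ => Tendsto.mul ?_ (log_slope_tendsto (c i) δ hδpos hδ0)
    refine Tendsto.const_mul _ ?_
    have hc : Continuous fun w : ℂ => cinner w (triTau ^ (i:ℕ)) := by
      simp only [cinner_eq]; fun_prop
    exact (hc.tendsto _).comp hv
  -- Step 3: identify the limit value
  have hval : (∑ i : Fin 3, (2/3) * cinner (y - z) (triTau ^ (i:ℕ)) * c i)
      = 2 * cinner (y - z)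
          (((c 0 : ℂ) + (c 1 : ℂ) * triTau + (c 2 : ℂ) * triTau ^ 2) / 3) := by
    rw [Fin.sum_univ_three]
    simp only [cinner_eq, Complex.div_re, Complex.div_im, Complex.add_re, Complex.add_im,
      Complex.mul_re, Complex.mul_im, Complex.ofReal_re, Complex.ofReal_im,
      Complex.one_re, Complex.one_im, pow_zero, pow_one, Complex.normSq_ofNat]
    norm_num
    ring
  have := (Real.continuous_exp.tendsto _).comp hg
  rw [hval] at this
  exact this.congr fun j => (hEq j).symm
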